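/- For every integer n ≥ 2, the abelianization G_n^{ab} = G_n/[G_n, G_n] of the crystallographic group G_n of holonomy n is isomorphic to C_n × C_n, the direct product of two cyclic groups of order n. -/

import Mathlib

open Multiplicative

theorem crystallographic_abelianization (n : ℕ) (hn : 2 ≤ n)
    (φ : Multiplicative (ZMod n) →* MulAut (Multiplicative (Fin (n - 1) → ℤ)))
    (hφ : ∀ i j : Fin (n - 1), (j : ℕ) = (i : ℕ) + 1 →
      φ (ofAdd 1) (ofAdd (Pi.single i 1)) = ofAdd (Pi.single j 1))
    (hφlast : ∀ i : Fin (n - 1), (i : ℕ) = n - 2 →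
      φ (ofAdd 1) (ofAdd (Pi.single i 1)) = (∏ j : Fin (n - 1), ofAdd (Pi.single j 1))⁻¹) :
    Nonempty (Abelianization (Multiplicative (Fin (n - 1) → ℤ) ⋊[φ] Multiplicative (ZMod n)) ≃*
      Multiplicative (ZMod n) × Multiplicative (ZMod n)) := by
  haveI : NeZero n := ⟨by omega⟩
  haveI : Fact (1 < n) := ⟨by omega⟩
  set G := Multiplicative (Fin (n - 1) → ℤ) ⋊[φ] Multiplicative (ZMod n) with hG
  -- the "sum of coordinates mod n" homomorphism
  let s : (Fin (n - 1) → ℤ) →+ ZMod n :=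
    { toFun := fun v => ∑ i, ((v i : ℤ) : ZMod n)
      map_zero' := by simp
      map_add' := by intro a b; simp [Finset.sum_add_distrib] }
  have hss : ∀ (j : Fin (n - 1)) (c : ℤ), s (Pi.single j c) = (c : ZMod n) := by
    intro j c
    simp [s, Pi.single_apply, Finset.sum_ite_eq']
  -- invariance of s under φ (ofAdd 1)
  let ξh : (Fin (n - 1) → ℤ) →+ (Fin (n - 1) → ℤ) :=
    { toFun := fun v => toAdd (φ (ofAdd 1) (ofAdd v))
      map_zero' := by simp
      map_add' := by intro a b; simp [ofAdd_add, map_mul] }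
  have key1 : ∀ v, s (ξh v) = s v := by
    have : s.comp ξh = s := by
      apply AddMonoidHom.functions_ext'
      intro i
      apply AddMonoidHom.ext_int
      simp only [AddMonoidHom.comp_apply, AddMonoidHom.single_apply]
      show s (ξh (Pi.single i 1)) = s (Pi.single i 1)
      rcases Nat.lt_or_ge (i : ℕ) (n - 2) with hi | hi
      · have hj : ((⟨(i : ℕ) + 1, by omega⟩ : Fin (n - 1)) : ℕ) = (i : ℕ) + 1 := rfl
        have := hφ i ⟨(i : ℕ) + 1, by omega⟩ hj
        show s (toAdd (φ (ofAdd 1) (ofAdd (Pi.single i 1)))) = s (Pi.single i 1)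
        rw [this]
        simp [hss]
      · have hi2 : (i : ℕ) = n - 2 := by have := i.isLt; omega
        have := hφlast i hi2
        show s (toAdd (φ (ofAdd 1) (ofAdd (Pi.single i 1)))) = s (Pi.single i 1)
        rw [this]
        have hprod : toAdd (∏ j : Fin (n - 1), ofAdd (Pi.single j (1 : ℤ)))
            = ∑ j : Fin (n - 1), Pi.single j (1 : ℤ) := by
          rw [toAdd_prod]; simp
        rw [toAdd_inv, hprod, map_neg, map_sum]
        simp only [hss]
        rw [Finset.sum_const, Finset.card_univ, Fintype.card_fin]
        have : ((n - 1 : ℕ) : ZMod n) = -1 := by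
          have h1 : ((n - 1 : ℕ) : ZMod n) = (n : ZMod n) - 1 := by
            push_cast [Nat.cast_sub (by omega : 1 ≤ n)]; ring
          rw [h1, ZMod.natCast_self]; ring
        simp [this]
    intro v
    exact DFunLike.congr_fun this v
  -- invariance under all φ c
  have keyc : ∀ (c : Multiplicative (ZMod n)) (v), s (toAdd (φ c (ofAdd v))) = s v := by
    have hpow : ∀ (k : ℕ) (v), s (toAdd (φ (ofAdd (1 : ZMod n) ^ k) (ofAdd v))) = s v := by
      intro k
      induction k with
      | zero => intro v; simp
      | succ m ih =>
        intro v
        have : φ (ofAdd (1 : ZMod n) ^ (m + 1)) (ofAdd v)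
            = φ (ofAdd (1 : ZMod n) ^ m) (φ (ofAdd 1) (ofAdd v)) := by
          rw [pow_succ, map_mul]; rfl
        rw [this]
        have h2 : φ (ofAdd (1 : ZMod n)) (ofAdd v) = ofAdd (ξh v) := by
          simp [ξh]
        rw [h2, ih, key1]
    intro c v
    have hval : (toAdd c).val • (1 : ZMod n) = toAdd c := by
      rw [nsmul_eq_mul, mul_one]
      exact ZMod.natCast_rightInverse (toAdd c)
    have hc : ofAdd (1 : ZMod n) ^ (toAdd c).val = c := by
      rw [← ofAdd_nsmul, hval, ofAdd_toAdd]
    rw [← hc, hpow]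
  -- the homomorphism f : G →* ZMod n × ZMod n
  let f1 : Multiplicative (Fin (n - 1) → ℤ) →* Multiplicative (ZMod n) × Multiplicative (ZMod n) :=
    (MonoidHom.inl _ _).comp (AddMonoidHom.toMultiplicative s)
  let f2 : Multiplicative (ZMod n) →* Multiplicative (ZMod n) × Multiplicative (ZMod n) :=
    MonoidHom.inr _ _
  have hcompat : ∀ g, f1.comp (φ g).toMonoidHom
      = (MulAut.conj (f2 g)).toMonoidHom.comp f1 := by
    intro g
    apply MonoidHom.ext
    intro v
    show f1 (φ g v) = MulAut.conj (f2 g) (f1 v)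
    rw [MulAut.conj_apply, mul_comm (f2 g) (f1 v), mul_inv_cancel_right]
    show (MonoidHom.inl _ _) ((AddMonoidHom.toMultiplicative s) (φ g v))
      = (MonoidHom.inl _ _) ((AddMonoidHom.toMultiplicative s) v)
    congr 1
    show ofAdd (s (toAdd (φ g v))) = ofAdd (s (toAdd v))
    have := keyc g (toAdd v)
    rw [ofAdd_toAdd] at this
    rw [this]
  let f : G →* Multiplicative (ZMod n) × Multiplicative (ZMod n) :=
    SemidirectProduct.lift f1 f2 hcompat
  let fbar : Abelianization G →* Multiplicative (ZMod n) × Multiplicative (ZMod n) :=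
    Abelianization.lift f
  -- the element x and the key relations
  let i0 : Fin (n - 1) := ⟨0, by omega⟩
  let x : Abelianization G :=
    Abelianization.of (SemidirectProduct.inl (ofAdd (Pi.single i0 1)))
  have hconj : ∀ (c : Multiplicative (ZMod n)) (w : Multiplicative (Fin (n - 1) → ℤ)),
      Abelianization.of (SemidirectProduct.inl (φ := φ) (φ c w))
        = Abelianization.of (SemidirectProduct.inl w) := by
    intro c w
    rw [SemidirectProduct.inl_aut]
    simp only [map_mul, map_inv]
    rw [mul_comm (Abelianization.of (SemidirectProduct.inr c)), mul_inv_cancel_right]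
  have hall : ∀ j : Fin (n - 1),
      Abelianization.of (SemidirectProduct.inl (φ := φ) (ofAdd (Pi.single j 1))) = x := by
    have H : ∀ (k : ℕ) (hk : k < n - 1),
        Abelianization.of
          (SemidirectProduct.inl (φ := φ) (ofAdd (Pi.single (⟨k, hk⟩ : Fin (n - 1)) 1))) = x := by
      intro k
      induction k with
      | zero => intro hk; rfl
      | succ m ih =>
        intro hk
        have hm : m < n - 1 := by omega
        have hrel := hφ ⟨m, hm⟩ ⟨m + 1, hk⟩ rfl
        rw [← hrel, hconj, ih hm]
    intro j
    have := H (j : ℕ) j.isLt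
    simpa using this
  have hxn : x ^ n = 1 := by
    have hlast : ((⟨n - 2, by omega⟩ : Fin (n - 1)) : ℕ) = n - 2 := rfl
    have hrel := hφlast ⟨n - 2, by omega⟩ hlast
    have h1 : Abelianization.of
        (SemidirectProduct.inl (φ := φ)
          (φ (ofAdd 1) (ofAdd (Pi.single ⟨n - 2, by omega⟩ 1)))) = x := by
      rw [hconj, hall]
    rw [hrel] at h1
    rw [map_inv, map_inv] at h1
    have hp : Abelianization.of (SemidirectProduct.inl (φ := φ)
        (∏ j : Fin (n - 1), ofAdd (Pi.single j 1))) = x ^ (n - 1) := by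
      have hmp := map_prod (Abelianization.of.comp (SemidirectProduct.inl (φ := φ)))
        (fun j : Fin (n - 1) => ofAdd (Pi.single j 1)) Finset.univ
      simp only [MonoidHom.comp_apply] at hmp
      rw [hmp]
      simp only [hall]
      rw [Finset.prod_const, Finset.card_univ, Fintype.card_fin]
    rw [hp] at h1
    have h2 : x ^ n = x ^ (n - 1) * x := by
      rw [← pow_succ]; congr 1; omega
    rw [h2]
    nth_rewrite 2 [← h1]
    rw [mul_inv_cancel]
  -- homomorphisms back
  let ge : Multiplicative (ZMod n) →* Abelianization G :=
    { toFun := fun c => x ^ (toAdd c).val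
      map_one' := by
        show x ^ (0 : ZMod n).val = 1
        simp [ZMod.val_zero]
      map_mul' := by
        intro a b
        show x ^ (toAdd a + toAdd b).val = x ^ (toAdd a).val * x ^ (toAdd b).val
        rw [ZMod.val_add, ← pow_add, ← pow_eq_pow_mod _ hxn] }
  let gt : Multiplicative (ZMod n) →* Abelianization G :=
    Abelianization.of.comp SemidirectProduct.inr
  let g : Multiplicative (ZMod n) × Multiplicative (ZMod n) →* Abelianization G :=
    ge.coprod gt
  -- key identity: of (inl (ofAdd v)) = x ^ (s v).val
  have hkey : ∀ v : Fin (n - 1) → ℤ,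
      Abelianization.of (SemidirectProduct.inl (φ := φ) (ofAdd v)) = x ^ (s v).val := by
    let F1 : (Fin (n - 1) → ℤ) →+ Additive (Abelianization G) :=
      { toFun := fun v =>
          Additive.ofMul (Abelianization.of (SemidirectProduct.inl (φ := φ) (ofAdd v)))
        map_zero' := by simp
        map_add' := by intro a b; simp [ofAdd_add, map_mul] }
    let F2 : (Fin (n - 1) → ℤ) →+ Additive (Abelianization G) :=
      { toFun := fun v => Additive.ofMul (x ^ (s v).val)
        map_zero' := by simp [ZMod.val_zero]
        map_add' := by
          intro a b
          simp only [map_add]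
          rw [ZMod.val_add, ← pow_eq_pow_mod _ hxn, pow_add]
          rfl }
    have : F1 = F2 := by
      apply AddMonoidHom.functions_ext'
      intro i
      apply AddMonoidHom.ext_int
      simp only [AddMonoidHom.comp_apply, AddMonoidHom.single_apply]
      show Additive.ofMul (Abelianization.of (SemidirectProduct.inl (φ := φ)
          (ofAdd (Pi.single i 1)))) = Additive.ofMul (x ^ (s (Pi.single i 1)).val)
      rw [hall, hss]
      norm_num [ZMod.val_one]
    intro v
    exact congrArg Additive.toMul (DFunLike.congr_fun this v)
  -- the two composites
  have hgf : g.comp fbar = MonoidHom.id _ := by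
    apply Abelianization.hom_ext
    apply SemidirectProduct.hom_ext
    · refine MonoidHom.ext fun v => ?_
      simp only [MonoidHom.comp_apply, MonoidHom.id_apply]
      show g (fbar (Abelianization.of (SemidirectProduct.inl v)))
        = Abelianization.of (SemidirectProduct.inl v)
      have : fbar (Abelianization.of (SemidirectProduct.inl v)) = f1 v := by
        show Abelianization.lift f (Abelianization.of (SemidirectProduct.inl v)) = f1 v
        rw [Abelianization.lift_apply_of]
        exact SemidirectProduct.lift_inl f1 f2 hcompat v
      rw [this]
      show g (ofAdd (s (toAdd v)), 1) = Abelianization.of (SemidirectProduct.inl v)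
      show ge (ofAdd (s (toAdd v))) * gt 1 = Abelianization.of (SemidirectProduct.inl v)
      rw [map_one, mul_one]
      show x ^ (toAdd (ofAdd (s (toAdd v)))).val = Abelianization.of (SemidirectProduct.inl v)
      rw [toAdd_ofAdd, ← hkey, ofAdd_toAdd]
    · refine MonoidHom.ext fun c => ?_
      simp only [MonoidHom.comp_apply, MonoidHom.id_apply]
      show g (fbar (Abelianization.of (SemidirectProduct.inr c)))
        = Abelianization.of (SemidirectProduct.inr c)
      have : fbar (Abelianization.of (SemidirectProduct.inr c)) = f2 c := by
        show Abelianization.lift f (Abelianization.of (SemidirectProduct.inr c)) = f2 c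
        rw [Abelianization.lift_apply_of]
        exact SemidirectProduct.lift_inr f1 f2 hcompat c
      rw [this]
      show ge 1 * gt c = Abelianization.of (SemidirectProduct.inr c)
      rw [map_one, one_mul]
      rfl
  have hfg : fbar.comp g = MonoidHom.id _ := by
    ext1 p
    simp only [MonoidHom.comp_apply, MonoidHom.id_apply]
    show fbar (ge p.1 * gt p.2) = p
    rw [map_mul]
    have h1 : fbar (ge p.1) = (p.1, 1) := by
      show fbar (x ^ (toAdd p.1).val) = (p.1, 1)
      rw [map_pow]
      have hx : fbar x = (ofAdd (1 : ZMod n), 1) := by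
        show Abelianization.lift f (Abelianization.of
          (SemidirectProduct.inl (ofAdd (Pi.single i0 1)))) = (ofAdd (1 : ZMod n), 1)
        rw [Abelianization.lift_apply_of]
        have := SemidirectProduct.lift_inl f1 f2 hcompat (ofAdd (Pi.single i0 1))
        rw [this]
        show (ofAdd (s (Pi.single i0 1)), 1) = (ofAdd (1 : ZMod n), 1)
        rw [hss]
        norm_num
      rw [hx, Prod.pow_mk, one_pow]
      congr 1
      show ofAdd (1 : ZMod n) ^ (toAdd p.1).val = p.1
      rw [← ofAdd_nsmul, nsmul_eq_mul, mul_one]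
      rw [show (((toAdd p.1).val : ℕ) : ZMod n) = toAdd p.1 from ZMod.natCast_rightInverse (toAdd p.1), ofAdd_toAdd]
    have h2 : fbar (gt p.2) = (1, p.2) := by
      show Abelianization.lift f (Abelianization.of (SemidirectProduct.inr p.2)) = (1, p.2)
      rw [Abelianization.lift_apply_of]
      exact SemidirectProduct.lift_inr f1 f2 hcompat p.2
    rw [h1, h2]
    ext <;> simp
  exact ⟨MonoidHom.toMulEquiv fbar g hgf hfg⟩
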